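/- arXiv:1706.08170 — 2 statements merged into one kernel-verified Lean document; each statement's English description precedes it below -/
import Mathlib

section
/- If μ is a simple quasi-measure on a Hausdorff space X that is subadditive on open sets (μ(U ∪ V) ≤ μ(U) + μ(V)), then μ = δ_x for some point x ∈ X. In particular, every simple quasi-measure on ℝ is a Dirac measure. -/
open Set MeasureTheory BoundedContinuousFunction Filter Topology

/-- An *image* is a set that is either open or closed. -/
def IsImage {X : Type*} [TopologicalSpace X] (A : Set X) : Prop := IsOpen A ∨ IsClosed A

/-- A (normalized, additive, compact-regular) quasi-measure on the images of `X`. -/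
structure IsQuasiMeasure {X : Type*} [TopologicalSpace X] (μ : Set X → ℝ) : Prop where
  nonneg : ∀ A : Set X, IsImage A → 0 ≤ μ A
  normalized : μ Set.univ = 1
  additive : ∀ A B : Set X, IsImage A → IsImage B → IsImage (A ∪ B) → Disjoint A B →
    μ (A ∪ B) = μ A + μ B
  regular : ∀ U : Set X, IsOpen U →
    IsLUB {r : ℝ | ∃ K : Set X, IsCompact K ∧ K ⊆ U ∧ μ K = r} (μ U)

/-- A quasi-measure is simple if it only takes the values 0 and 1. -/
def IsSimpleQM {X : Type*} [TopologicalSpace X] (μ : Set X → ℝ) : Prop :=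
  ∀ A : Set X, IsImage A → μ A = 0 ∨ μ A = 1

-- Membership in the singly generated algebra `A(c) = {φ ∘ c : φ ∈ C(ℝ,ℝ)}`.
-- def InAlg {X : Type*} [TopologicalSpace X] (c f : X →ᵇ ℝ) : Prop :=
-- ∃ φ : C(ℝ, ℝ), ∀ x, f x = φ (c x)
-- 
-- -- The quasi-integral of `a` with respect to `μ`: `∫ t dμ_a(t)` where `μ_a`
-- -- is the Borel probability measure extending `μ ∘ a⁻¹` (if it exists).
open Classical in
noncomputable def qint {X : Type*} [TopologicalSpace X] (μ : Set X → ℝ) (a : X →ᵇ ℝ) : ℝ :=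
  if h : ∃ ν : MeasureTheory.Measure ℝ, MeasureTheory.IsProbabilityMeasure ν ∧
      ∀ A : Set ℝ, IsImage A → ν A = ENNReal.ofReal (μ (a ⁻¹' A))
  then ∫ t, t ∂ h.choose else 0

/-- An image-transformation from `X` to `Y`. -/
structure IsImageTransformation {X Y : Type*} [TopologicalSpace X] [TopologicalSpace Y]
    (q : Set X → Set Y) : Prop where
  image : ∀ A : Set X, IsImage A → IsImage (q A)
  top : q Set.univ = Set.univ
  openMap : ∀ U : Set X, IsOpen U → IsOpen (q U)
  additive : ∀ A B : Set X, IsImage A → IsImage B → IsImage (A ∪ B) → Disjoint A B →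
    q (A ∪ B) = q A ∪ q B ∧ Disjoint (q A) (q B)
  regular : ∀ U : Set X, IsOpen U → ∀ K : Set Y, IsCompact K → K ⊆ q U →
    ∃ L : Set X, IsCompact L ∧ L ⊆ U ∧ K ⊆ q L

set_option linter.unusedSectionVars false

section Aux
variable {X : Type*} [TopologicalSpace X] [T2Space X] {μ : Set X → ℝ}

lemma image_compl {A : Set X} (hA : IsImage A) : IsImage Aᶜ := by
  rcases hA with h | h
  · exact Or.inr h.isClosed_compl
  · exact Or.inl h.isOpen_compl

lemma qm_compl (hμ : IsQuasiMeasure μ) {A : Set X} (hA : IsImage A) : μ A + μ Aᶜ = 1 := by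
  have h := hμ.additive A Aᶜ hA (image_compl hA)
    (by rw [union_compl_self]; exact Or.inl isOpen_univ) disjoint_compl_right
  rw [union_compl_self, hμ.normalized] at h
  linarith

lemma qm_le_one (hμ : IsQuasiMeasure μ) {A : Set X} (hA : IsImage A) : μ A ≤ 1 := by
  have := qm_compl hμ hA
  have := hμ.nonneg Aᶜ (image_compl hA)
  linarith

lemma qm_empty (hμ : IsQuasiMeasure μ) : μ (∅ : Set X) = 0 := by
  have h := hμ.additive ∅ ∅ (Or.inl isOpen_empty) (Or.inl isOpen_empty)
    (by rw [union_empty]; exact Or.inl isOpen_empty) (disjoint_bot_left)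
  rw [union_empty] at h
  linarith

lemma qm_mono_co (hμ : IsQuasiMeasure μ) {K U : Set X} (hK : IsCompact K) (hU : IsOpen U)
    (hKU : K ⊆ U) : μ K ≤ μ U :=
  (hμ.regular U hU).1 ⟨K, hK, hKU, rfl⟩

lemma qm_mono_oo (hμ : IsQuasiMeasure μ) {U V : Set X} (hU : IsOpen U) (hV : IsOpen V)
    (hUV : U ⊆ V) : μ U ≤ μ V := by
  refine (hμ.regular U hU).2 ?_
  rintro r ⟨K, hK, hs, rfl⟩
  exact qm_mono_co hμ hK hV (hs.trans hUV)

lemma qm_mono_cc (hμ : IsQuasiMeasure μ) {K C : Set X} (hK : IsCompact K) (hC : IsClosed C)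
    (hKC : K ⊆ C) : μ K ≤ μ C := by
  have h1 := qm_compl hμ (Or.inr hK.isClosed)
  have h2 := qm_compl hμ (Or.inr hC)
  have h3 : μ Cᶜ ≤ μ Kᶜ :=
    qm_mono_oo hμ hC.isOpen_compl hK.isClosed.isOpen_compl (compl_subset_compl.2 hKC)
  linarith

lemma qm_exists_compact (hμ : IsQuasiMeasure μ) (hsimple : IsSimpleQM μ) {U : Set X}
    (hU : IsOpen U) (h1 : μ U = 1) : ∃ K : Set X, IsCompact K ∧ K ⊆ U ∧ μ K = 1 := by
  by_contra h
  push_neg at h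
  have hub : (0 : ℝ) ∈ upperBounds {r : ℝ | ∃ K : Set X, IsCompact K ∧ K ⊆ U ∧ μ K = r} := by
    rintro r ⟨K, hK, hs, rfl⟩
    rcases hsimple K (Or.inr hK.isClosed) with h0 | h01
    · exact le_of_eq h0
    · exact absurd h01 (h K hK hs)
  have := (hμ.regular U hU).2 hub
  linarith

lemma qm_nonempty (hμ : IsQuasiMeasure μ) {K : Set X} (h1 : μ K = 1) : K.Nonempty := by
  rw [nonempty_iff_ne_empty]
  rintro rfl
  rw [qm_empty hμ] at h1
  norm_num at h1

lemma qm_pair (hμ : IsQuasiMeasure μ) {K L : Set X} (hK : IsCompact K) (hL : IsCompact L)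
    (hK1 : μ K = 1) (hL1 : μ L = 1) : (K ∩ L).Nonempty := by
  rw [nonempty_iff_ne_empty]
  intro hd
  obtain ⟨U, V, hU, hV, hKU, hLV, hUV⟩ :=
    SeparatedNhds.of_isCompact_isCompact hK hL (disjoint_iff_inter_eq_empty.2 hd)
  have h1 : (1 : ℝ) ≤ μ U := hK1 ▸ qm_mono_co hμ hK hU hKU
  have h2 : (1 : ℝ) ≤ μ V := hL1 ▸ qm_mono_co hμ hL hV hLV
  have h3 := hμ.additive U V (Or.inl hU) (Or.inl hV) (Or.inl (hU.union hV)) hUV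
  have h4 := qm_le_one hμ (Or.inl (hU.union hV))
  linarith

end Aux

open Classical in
lemma qm_part1 {X : Type*} [TopologicalSpace X] [T2Space X] {μ : Set X → ℝ}
    (hμ : IsQuasiMeasure μ) (hsimple : IsSimpleQM μ)
    (hsub : ∀ U V : Set X, IsOpen U → IsOpen V → μ (U ∪ V) ≤ μ U + μ V) :
    ∃ x : X, ∀ A : Set X, IsImage A → μ A = if x ∈ A then 1 else 0 := by
  classical
  obtain ⟨K₀, hK₀c, -, hK₀⟩ := qm_exists_compact hμ hsimple isOpen_univ hμ.normalized
  set 𝒦 : Set (Set X) := {K | IsCompact K ∧ μ K = 1} with h𝒦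
  have hinter : ∀ K L, K ∈ 𝒦 → L ∈ 𝒦 → K ∩ L ∈ 𝒦 := by
    rintro K L ⟨hKc, hK1⟩ ⟨hLc, hL1⟩
    have hKLc : IsCompact (K ∩ L) := hKc.inter_right hLc.isClosed
    refine ⟨hKLc, ?_⟩
    rcases hsimple (K ∩ L) (Or.inr hKLc.isClosed) with h0 | h1
    · exfalso
      have hopen : IsOpen (K ∩ L)ᶜ := hKLc.isClosed.isOpen_compl
      have hc1 : μ (K ∩ L)ᶜ = 1 := by
        have := qm_compl hμ (Or.inr hKLc.isClosed); linarith
      obtain ⟨M, hMc, hMs, hM1⟩ := qm_exists_compact hμ hsimple hopen hc1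
      have hcover : Kᶜ ∪ Lᶜ ∪ Mᶜ = univ := by
        rw [eq_univ_iff_forall]
        intro y
        by_contra hy
        simp only [mem_union, mem_compl_iff, not_or, not_not] at hy
        exact hMs hy.2 ⟨hy.1.1, hy.1.2⟩
      have hKo : IsOpen Kᶜ := hKc.isClosed.isOpen_compl
      have hLo : IsOpen Lᶜ := hLc.isClosed.isOpen_compl
      have hMo : IsOpen Mᶜ := hMc.isClosed.isOpen_compl
      have s1 := hsub (Kᶜ ∪ Lᶜ) Mᶜ (hKo.union hLo) hMo
      have s2 := hsub Kᶜ Lᶜ hKo hLo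
      have e1 := qm_compl hμ (Or.inr hKc.isClosed)
      have e2 := qm_compl hμ (Or.inr hLc.isClosed)
      have e3 := qm_compl hμ (Or.inr hMc.isClosed)
      rw [hcover, hμ.normalized] at s1
      linarith
    · exact h1
  have hneK : ∀ K ∈ 𝒦, (K : Set X).Nonempty := fun K hK => qm_nonempty hμ hK.2
  have hnι : Nonempty 𝒦 := ⟨⟨K₀, hK₀c, hK₀⟩⟩
  obtain ⟨x, hx⟩ := IsCompact.nonempty_iInter_of_directed_nonempty_isCompact_isClosed
    (fun K : 𝒦 => (K : Set X))
    (fun K L => ⟨⟨K ∩ L, hinter K L K.2 L.2⟩, inter_subset_left, inter_subset_right⟩)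
    (fun K => hneK K K.2) (fun K => K.2.1) (fun K => K.2.1.isClosed)
  have hmem : ∀ K ∈ 𝒦, x ∈ K := by
    intro K hK
    exact (mem_iInter.1 hx) ⟨K, hK⟩
  have hopen0 : ∀ U : Set X, IsOpen U → x ∉ U → μ U = 0 := by
    intro U hU hxU
    rcases hsimple U (Or.inl hU) with h | h
    · exact h
    · obtain ⟨K, hKc, hKU, hK1⟩ := qm_exists_compact hμ hsimple hU h
      exact absurd (hKU (hmem K ⟨hKc, hK1⟩)) hxU
  have hopen1 : ∀ U : Set X, IsOpen U → x ∈ U → μ U = 1 := by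
    intro U hU hxU
    rcases hsimple U (Or.inl hU) with h0 | h
    · exfalso
      set C := K₀ ∩ Uᶜ with hC
      have hCc : IsCompact C := hK₀c.inter_right hU.isClosed_compl
      have hxC : x ∉ C := fun h => h.2 hxU
      obtain ⟨W, V, hW, hV, hxW, hCV, hWV⟩ :=
        SeparatedNhds.of_isCompact_isCompact isCompact_singleton hCc
          (disjoint_singleton_left.2 hxC)
      have hK₀sub : K₀ ⊆ U ∪ V := by
        intro y hy
        by_cases hyU : y ∈ U
        · exact Or.inl hyU
        · exact Or.inr (hCV ⟨hy, hyU⟩)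
      have h1 : (1 : ℝ) ≤ μ (U ∪ V) := hK₀ ▸ qm_mono_co hμ hK₀c (hU.union hV) hK₀sub
      have h2 := hsub U V hU hV
      have hV1 : μ V = 1 := by
        rcases hsimple V (Or.inl hV) with hv | hv
        · linarith
        · exact hv
      obtain ⟨M, hMc, hMV, hM1⟩ := qm_exists_compact hμ hsimple hV hV1
      have hxM : x ∈ M := hmem M ⟨hMc, hM1⟩
      exact Set.disjoint_left.1 hWV (hxW rfl) (hMV hxM)
    · exact h
  refine ⟨x, fun A hA => ?_⟩
  rcases hA with hAo | hAcl
  · by_cases hxA : x ∈ A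
    · rw [if_pos hxA]; exact hopen1 A hAo hxA
    · rw [if_neg hxA]; exact hopen0 A hAo hxA
  · have hc := qm_compl hμ (Or.inr hAcl)
    by_cases hxA : x ∈ A
    · have : μ Aᶜ = 0 := hopen0 Aᶜ hAcl.isOpen_compl (by simp [hxA])
      rw [if_pos hxA]; linarith
    · have : μ Aᶜ = 1 := hopen1 Aᶜ hAcl.isOpen_compl (by simp [hxA])
      rw [if_neg hxA]; linarith

open Classical in
lemma qm_real {ν : Set ℝ → ℝ} (hν : IsQuasiMeasure ν) (hs : IsSimpleQM ν) :
    ∃ t : ℝ, ∀ A : Set ℝ, IsImage A → ν A = if t ∈ A then 1 else 0 := by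
  classical
  obtain ⟨K₀, hK₀c, -, hK₀⟩ := qm_exists_compact hν hs isOpen_univ hν.normalized
  have hK₀ne : K₀.Nonempty := qm_nonempty hν hK₀
  set S : Set ℝ := {t | ν (Iic t) = 1} with hS
  have hbmem : sSup K₀ ∈ S := by
    have hsub : K₀ ⊆ Iic (sSup K₀) := fun y hy => le_csSup hK₀c.bddAbove hy
    have h1 : (1 : ℝ) ≤ ν (Iic (sSup K₀)) := hK₀ ▸ qm_mono_cc hν hK₀c isClosed_Iic hsub
    have h2 := qm_le_one hν (Or.inr (isClosed_Iic : IsClosed (Iic (sSup K₀))))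
    exact le_antisymm h2 h1
  have hSne : S.Nonempty := ⟨sSup K₀, hbmem⟩
  have hlow : ∀ s ∈ S, sInf K₀ - 1 ≤ s := by
    intro s hsS
    by_contra h
    push_neg at h
    have hsub : K₀ ⊆ Ioi s := fun y hy =>
      lt_of_lt_of_le (by linarith : s < sInf K₀) (csInf_le hK₀c.bddBelow hy)
    have h1 : (1 : ℝ) ≤ ν (Ioi s) := hK₀ ▸ qm_mono_co hν hK₀c isOpen_Ioi hsub
    have h2 := qm_compl hν (Or.inr (isClosed_Iic : IsClosed (Iic s)))
    rw [compl_Iic] at h2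
    have h3 : ν (Iic s) = 1 := hsS
    linarith
  have hbdd : BddBelow S := ⟨sInf K₀ - 1, hlow⟩
  set t₀ := sInf S with ht₀
  -- monotonicity of Iic measures
  have hmono : ∀ s t : ℝ, s ≤ t → ν (Iic s) ≤ ν (Iic t) := by
    intro s t hst
    have h1 := qm_compl hν (Or.inr (isClosed_Iic : IsClosed (Iic s)))
    have h2 := qm_compl hν (Or.inr (isClosed_Iic : IsClosed (Iic t)))
    rw [compl_Iic] at h1 h2
    have h3 : ν (Ioi t) ≤ ν (Ioi s) :=
      qm_mono_oo hν isOpen_Ioi isOpen_Ioi (Ioi_subset_Ioi hst)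
    linarith
  have hlt0 : ∀ s : ℝ, s < t₀ → ν (Iic s) = 0 := by
    intro s hst
    rcases hs (Iic s) (Or.inr isClosed_Iic) with h | h
    · exact h
    · exact absurd (csInf_le hbdd (h : s ∈ S)) (not_le.2 hst)
  have hgt1 : ∀ s : ℝ, t₀ < s → ν (Iic s) = 1 := by
    intro s hst
    obtain ⟨u, huS, hus⟩ := exists_lt_of_csInf_lt hSne hst
    have := hmono u s hus.le
    have h2 := qm_le_one hν (Or.inr (isClosed_Iic : IsClosed (Iic s)))
    have h3 : ν (Iic u) = 1 := huS
    linarith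
  have hIcc : ∀ ε : ℝ, 0 < ε → ν (Icc (t₀ - ε) (t₀ + ε)) = 1 := by
    intro ε hε
    have h1 : ν (Iio (t₀ - ε)) = 0 := by
      rcases hs (Iio (t₀ - ε)) (Or.inl isOpen_Iio) with h | h
      · exact h
      · exfalso
        obtain ⟨K, hKc, hKs, hK1⟩ := qm_exists_compact hν hs isOpen_Iio h
        have hKne : K.Nonempty := qm_nonempty hν hK1
        have hsupK : sSup K ∈ K := hKc.sSup_mem hKne
        have hlt : sSup K < t₀ - ε := hKs hsupK
        have h0 : ν (Iic (sSup K)) = 0 := hlt0 _ (by linarith)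
        have h4 : ν K ≤ ν (Iic (sSup K)) :=
          qm_mono_cc hν hKc isClosed_Iic (fun y hy => le_csSup hKc.bddAbove hy)
        linarith
    have h2 : ν (Ioi (t₀ + ε)) = 0 := by
      have hc := qm_compl hν (Or.inr (isClosed_Iic : IsClosed (Iic (t₀ + ε))))
      rw [compl_Iic] at hc
      have := hgt1 (t₀ + ε) (by linarith)
      linarith
    have h3 : ν (Iio (t₀ - ε) ∪ Ioi (t₀ + ε)) = 0 := by
      have hd : Disjoint (Iio (t₀ - ε)) (Ioi (t₀ + ε)) := by
        rw [Set.disjoint_left]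
        intro y hy1 hy2
        simp only [mem_Iio, mem_Ioi] at hy1 hy2
        linarith
      rw [hν.additive _ _ (Or.inl isOpen_Iio) (Or.inl isOpen_Ioi)
        (Or.inl (isOpen_Iio.union isOpen_Ioi)) hd, h1, h2]
      ring
    have hc := qm_compl hν (Or.inr (isClosed_Icc : IsClosed (Icc (t₀ - ε) (t₀ + ε))))
    have hceq : (Icc (t₀ - ε) (t₀ + ε))ᶜ = Iio (t₀ - ε) ∪ Ioi (t₀ + ε) := by
      ext y
      simp only [mem_compl_iff, mem_Icc, mem_union, mem_Iio, mem_Ioi, not_and_or, not_le]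
    rw [hceq, h3] at hc
    linarith
  refine ⟨t₀, ?_⟩
  have hopen1 : ∀ U : Set ℝ, IsOpen U → t₀ ∈ U → ν U = 1 := by
    intro U hU ht
    obtain ⟨ε, hε, hball⟩ := Metric.isOpen_iff.1 hU t₀ ht
    have hsub : Icc (t₀ - ε / 2) (t₀ + ε / 2) ⊆ U := by
      intro y hy
      apply hball
      rw [Metric.mem_ball, Real.dist_eq, abs_sub_lt_iff]
      constructor <;> [linarith [hy.2]; linarith [hy.1]]
    have h1 : (1 : ℝ) ≤ ν U :=
      (hIcc (ε / 2) (by linarith)) ▸ qm_mono_co hν isCompact_Icc hU hsub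
    have h2 := qm_le_one hν (Or.inl hU)
    linarith
  have hopen0 : ∀ U : Set ℝ, IsOpen U → t₀ ∉ U → ν U = 0 := by
    intro U hU ht
    rcases hs U (Or.inl hU) with h | h
    · exact h
    · exfalso
      obtain ⟨K, hKc, hKU, hK1⟩ := qm_exists_compact hν hs hU h
      have htK : t₀ ∈ K := by
        rw [← hKc.isClosed.closure_eq]
        rw [Metric.mem_closure_iff]
        intro ε hε
        obtain ⟨y, hyK, hyI⟩ := qm_pair hν hKc isCompact_Icc hK1 (hIcc (ε / 2) (by linarith))
        refine ⟨y, hyK, ?_⟩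
        rw [Real.dist_eq, abs_sub_lt_iff]
        constructor <;> [linarith [hyI.1]; linarith [hyI.2]]
      exact ht (hKU htK)
  intro A hA
  rcases hA with hAo | hAcl
  · by_cases hxA : t₀ ∈ A
    · rw [if_pos hxA]; exact hopen1 A hAo hxA
    · rw [if_neg hxA]; exact hopen0 A hAo hxA
  · have hc := qm_compl hν (Or.inr hAcl)
    by_cases hxA : t₀ ∈ A
    · have : ν Aᶜ = 0 := hopen0 Aᶜ hAcl.isOpen_compl (by simp [hxA])
      rw [if_pos hxA]; linarith
    · have : ν Aᶜ = 1 := hopen1 Aᶜ hAcl.isOpen_compl (by simp [hxA])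
      rw [if_neg hxA]; linarith

-- STATEMENT 14: a simple quasi-measure which is subadditive on open sets is a Dirac
-- measure; in particular every simple quasi-measure on ℝ is a Dirac measure.
open Classical in
theorem simple_subadditive_is_dirac {X : Type*} [TopologicalSpace X] [T2Space X]
    (μ : Set X → ℝ) (hμ : IsQuasiMeasure μ) (hsimple : IsSimpleQM μ)
    (hsub : ∀ U V : Set X, IsOpen U → IsOpen V → μ (U ∪ V) ≤ μ U + μ V) :
    (∃ x : X, ∀ A : Set X, IsImage A → μ A = if x ∈ A then 1 else 0) ∧
    ∀ ν : Set ℝ → ℝ, IsQuasiMeasure ν → IsSimpleQM ν →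
      ∃ t : ℝ, ∀ A : Set ℝ, IsImage A → ν A = if t ∈ A then 1 else 0 := by
  exact ⟨qm_part1 hμ hsimple hsub, fun ν hν hs => qm_real hν hs⟩
end

section
/- Pullback of quasi-measures: if q is an image-transformation from X to Y and μ is a quasi-measure on Y, then q*μ := μ ∘ q is a quasi-measure on X. Moreover, if σ is simple then q*σ is simple, and the adjoint is anti-multiplicative: (p ∘ q)* = q* ∘ p* for composable image-transformations. -/
open Set MeasureTheory BoundedContinuousFunction Filter Topology

/-- Membership in the singly generated algebra `A(c) = {φ ∘ c : φ ∈ C(ℝ,ℝ)}`. -/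
def InAlg {X : Type*} [TopologicalSpace X] (c f : X →ᵇ ℝ) : Prop :=
  ∃ φ : C(ℝ, ℝ), ∀ x, f x = φ (c x)

section Aux
variable {W : Type*} [TopologicalSpace W] [T2Space W] {μ : Set W → ℝ}

lemma qm_compact_le_open (h : IsQuasiMeasure μ) {K U : Set W} (hK : IsCompact K)
    (hU : IsOpen U) (hKU : K ⊆ U) : μ K ≤ μ U :=
  (h.regular U hU).1 ⟨K, hK, hKU, rfl⟩

lemma qm_open_le_open (h : IsQuasiMeasure μ) {U V : Set W} (hU : IsOpen U)
    (hV : IsOpen V) (hUV : U ⊆ V) : μ U ≤ μ V := by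
  refine (h.regular U hU).2 ?_
  rintro r ⟨K, hK, hKU, rfl⟩
  exact qm_compact_le_open h hK hV (hKU.trans hUV)

lemma qm_closed_le_open (h : IsQuasiMeasure μ) {F V : Set W} (hF : IsClosed F)
    (hV : IsOpen V) (hFV : F ⊆ V) : μ F ≤ μ V := by
  have hdiff : IsOpen (V \ F) := hV.sdiff hF
  have hdisj : Disjoint F (V \ F) := Set.disjoint_sdiff_right
  have hunion : F ∪ (V \ F) = V := Set.union_diff_cancel' le_rfl hFV
  have := h.additive F (V \ F) (Or.inr hF) (Or.inl hdiff)
    (by rw [hunion]; exact Or.inl hV) hdisj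
  rw [hunion] at this
  have := h.nonneg (V \ F) (Or.inl hdiff)
  linarith

lemma qm_compl_s16 (h : IsQuasiMeasure μ) {F : Set W} (hF : IsClosed F) :
    μ F + μ Fᶜ = 1 := by
  have := h.additive F Fᶜ (Or.inr hF) (Or.inl hF.isOpen_compl)
    (by rw [Set.union_compl_self]; exact Or.inl isOpen_univ) disjoint_compl_right
  rw [Set.union_compl_self, h.normalized] at this
  linarith

lemma qm_closed_le_closed (h : IsQuasiMeasure μ) {F G : Set W} (hF : IsClosed F)
    (hG : IsClosed G) (hFG : F ⊆ G) : μ F ≤ μ G := by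
  have h1 := qm_compl_s16 h hF
  have h2 := qm_compl_s16 h hG
  have := qm_open_le_open h hG.isOpen_compl hF.isOpen_compl
    (Set.compl_subset_compl.mpr hFG)
  linarith

lemma qm_mono (h : IsQuasiMeasure μ) {A B : Set W} (hA : IsImage A) (hB : IsImage B)
    (hAB : A ⊆ B) : μ A ≤ μ B := by
  rcases hA with hA | hA <;> rcases hB with hB | hB
  · exact qm_open_le_open h hA hB hAB
  · refine (h.regular A hA).2 ?_
    rintro r ⟨K, hK, hKA, rfl⟩
    exact qm_closed_le_closed h hK.isClosed hB (hKA.trans hAB)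
  · exact qm_closed_le_open h hA hB hAB
  · exact qm_closed_le_closed h hA hB hAB

end Aux

/-- pullback of quasi-measures along image-transformations. -/
theorem imageTransformation_pullback {X Y Z : Type*} [TopologicalSpace X] [T2Space X]
    [TopologicalSpace Y] [T2Space Y] [TopologicalSpace Z] [T2Space Z]
    (q : Set X → Set Y) (hq : IsImageTransformation q) :
    (∀ μ : Set Y → ℝ, IsQuasiMeasure μ → IsQuasiMeasure (fun A : Set X => μ (q A))) ∧
    (∀ σ : Set Y → ℝ, IsQuasiMeasure σ → IsSimpleQM σ →
      IsSimpleQM (fun A : Set X => σ (q A))) ∧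
    ∀ (p : Set Y → Set Z), IsImageTransformation p → ∀ (μ : Set Z → ℝ),
      (fun A : Set X => μ ((p ∘ q) A)) = fun A : Set X => (fun B : Set Y => μ (p B)) (q A) := by
  obtain ⟨himg, htop, hopen, hadd, hreg⟩ := hq
  have hQM : ∀ μ : Set Y → ℝ, IsQuasiMeasure μ → IsQuasiMeasure (fun A : Set X => μ (q A)) := by
    intro μ hμ
    refine ⟨?_, ?_, ?_, ?_⟩
    · intro A hA
      exact hμ.nonneg (q A) (himg A hA)
    · simp only [htop, hμ.normalized]
    · intro A B hA hB hAB hdisj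
      obtain ⟨he, hd⟩ := hadd A B hA hB hAB hdisj
      simp only [he]
      exact hμ.additive (q A) (q B) (himg A hA) (himg B hB)
        (he ▸ himg (A ∪ B) hAB) hd
    · intro U hU
      constructor
      · rintro r ⟨K, hK, hKU, rfl⟩
        -- q K ⊆ q U since q U = q K ∪ q (U \ K)
        have hKc : IsClosed K := hK.isClosed
        have hdiff : IsOpen (U \ K) := hU.sdiff hKc
        have hunion : K ∪ (U \ K) = U := Set.union_diff_cancel' le_rfl hKU
        obtain ⟨he, _⟩ := hadd K (U \ K) (Or.inr hKc) (Or.inl hdiff)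
          (by rw [hunion]; exact Or.inl hU) Set.disjoint_sdiff_right
        rw [hunion] at he
        have hsub : q K ⊆ q U := by rw [he]; exact Set.subset_union_left
        exact qm_mono hμ (himg K (Or.inr hKc)) (Or.inl (hopen U hU)) hsub
      · intro b hb
        refine (hμ.regular (q U) (hopen U hU)).2 ?_
        rintro r ⟨K', hK', hK'U, rfl⟩
        obtain ⟨L, hL, hLU, hKL⟩ := hreg U hU K' hK' hK'U
        have h1 : μ K' ≤ μ (q L) :=
          qm_mono hμ (Or.inr hK'.isClosed) (himg L (Or.inr hL.isClosed)) hKL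
        have h2 : μ (q L) ≤ b := hb ⟨L, hL, hLU, rfl⟩
        linarith
  refine ⟨hQM, ?_, ?_⟩
  · intro σ hσ hs A hA
    exact hs (q A) (himg A hA)
  · intro p hp μ
    rfl
end
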